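/- Let X be a finite-dimensional real inner product space, let 0 ≤ L < 1, and let f : X → X be Lipschitz continuous with Lipschitz constant at most L. Then the residual map φ = Id − f is bijective, and its inverse ψ = φ⁻¹ satisfies, for all z₁, z₂ ∈ X, the inequality (1 − L²)·‖ψ(z₁) − ψ(z₂)‖² + ‖z₁ − z₂‖² ≤ 2·⟨z₁ − z₂, ψ(z₁) − ψ(z₂)⟩. -/

import Mathlib

open RealInnerProductSpace

/-- **Inverse of an iResNet satisfies the monotonicity–coercivity condition.**
If `f : X → X` is Lipschitz with constant `L < 1`, then the residual map
`φ = Id - f` is bijective and its inverse `ψ` satisfies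
`(1 - L²)‖ψ z₁ - ψ z₂‖² + ‖z₁ - z₂‖² ≤ 2⟪z₁ - z₂, ψ z₁ - ψ z₂⟫` for all `z₁ z₂`. -/
theorem iResNet_inverse_monotone
    {X : Type*} [NormedAddCommGroup X] [InnerProductSpace ℝ X] [FiniteDimensional ℝ X]
    (L : ℝ) (hL0 : 0 ≤ L) (hL1 : L < 1)
    (f : X → X) (hf : ∀ a b : X, ‖f a - f b‖ ≤ L * ‖a - b‖) :
    Function.Bijective (fun x : X => x - f x) ∧
      ∀ z₁ z₂ : X,
        (1 - L ^ 2) *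
            ‖Function.invFun (fun x : X => x - f x) z₁ -
              Function.invFun (fun x : X => x - f x) z₂‖ ^ 2 +
          ‖z₁ - z₂‖ ^ 2 ≤
        2 * ⟪z₁ - z₂,
              Function.invFun (fun x : X => x - f x) z₁ -
                Function.invFun (fun x : X => x - f x) z₂⟫ := by
  set φ : X → X := fun x => x - f x with hφ
  -- injectivity
  have hinj : Function.Injective φ := by
    intro a b hab
    have hab' : a - b = f a - f b := sub_eq_sub_iff_sub_eq_sub.mp hab
    have h1 : ‖a - b‖ ≤ L * ‖a - b‖ := by
      calc ‖a - b‖ = ‖f a - f b‖ := by rw [hab']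
        _ ≤ L * ‖a - b‖ := hf a b
    have h0 : ‖a - b‖ = 0 := by nlinarith [norm_nonneg (a - b)]
    exact sub_eq_zero.mp (norm_eq_zero.mp h0)
  have hinj' : Function.Injective φ := hinj
  -- surjectivity via Banach fixed point
  have hsurj : Function.Surjective φ := by
    intro z
    haveI : Nonempty X := ⟨0⟩
    set LN : NNReal := ⟨L, hL0⟩ with hLN
    have hlip : LipschitzWith LN (fun x => f x + z) := by
      intro a b
      simp only [edist_dist, dist_eq_norm]
      rw [← ENNReal.ofReal_coe_nnreal, ← ENNReal.ofReal_mul (by positivity)]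
      apply ENNReal.ofReal_le_ofReal
      have h : ‖f a - f b‖ ≤ (LN : ℝ) * ‖a - b‖ := hf a b
      simpa only [add_sub_add_right_eq_sub] using h
    have hc : ContractingWith LN (fun x => f x + z) := ⟨by exact_mod_cast hL1, hlip⟩
    obtain ⟨x, hx, -⟩ := hc.exists_fixedPoint 0 (edist_lt_top _ _).ne
    refine ⟨x, ?_⟩
    have hx' : f x + z = x := hx
    simp only [hφ]
    rw [sub_eq_iff_eq_add]
    rw [add_comm]; exact hx'.symm
  refine ⟨⟨hinj, hsurj⟩, ?_⟩
  intro z₁ z₂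
  set ψ := Function.invFun φ with hψ
  have hri : ∀ z, φ (ψ z) = z := fun z => Function.rightInverse_invFun hsurj z
  set x₁ := ψ z₁
  set x₂ := ψ z₂
  have h₁ : x₁ - f x₁ = z₁ := hri z₁
  have h₂ : x₂ - f x₂ = z₂ := hri z₂
  have key : ‖(x₁ - x₂) - (z₁ - z₂)‖ ≤ L * ‖x₁ - x₂‖ := by
    have : (x₁ - x₂) - (z₁ - z₂) = f x₁ - f x₂ := by
      rw [← h₁, ← h₂]; abel
    rw [this]; exact hf x₁ x₂
  have key2 : ‖(x₁ - x₂) - (z₁ - z₂)‖ ^ 2 ≤ L ^ 2 * ‖x₁ - x₂‖ ^ 2 := by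
    nlinarith [norm_nonneg ((x₁ - x₂) - (z₁ - z₂)), norm_nonneg (x₁ - x₂)]
  have hexp : ‖(x₁ - x₂) - (z₁ - z₂)‖ ^ 2 =
      ‖x₁ - x₂‖ ^ 2 - 2 * ⟪x₁ - x₂, z₁ - z₂⟫ + ‖z₁ - z₂‖ ^ 2 := by
    rw [@norm_sub_sq_real]
  have hcomm : ⟪z₁ - z₂, x₁ - x₂⟫ = ⟪x₁ - x₂, z₁ - z₂⟫ := real_inner_comm _ _
  rw [hcomm]
  nlinarith [key2, hexp]
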